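/- Let C ⊆ F_q^n be a linear code and 1 ≤ k₁ < k₂ < m. Then the robustness constants of axis-parallel flat tests for C^{⊗m} satisfy ρ_r(T_m^{k₁}, C^{⊗m}) ≥ ρ_r(T_m^{k₂}, C^{⊗m}) · ρ_r(T_{k₂}^{k₁}, C^{⊗k₂}). -/

import Mathlib

noncomputable section

open Polynomial

/-- Normalized Hamming weight. -/
def normWt {ι F : Type*} [Fintype ι] [Zero F] (x : ι → F) : ℝ :=
  (Nat.card {p : ι // x p ≠ 0} : ℝ) / (Fintype.card ι : ℝ)

/-- Normalized Hamming distance from a word to a set of words. -/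
def distTo {ι F : Type*} [Fintype ι] [AddGroup F] (x : ι → F) (S : Set (ι → F)) : ℝ :=
  sInf ((fun c => normWt (x - c)) '' S)

/-- Normalized minimum distance of a code. -/
def minDist {ι F : Type*} [Fintype ι] [Zero F] (S : Set (ι → F)) : ℝ :=
  sInf (normWt '' (S \ {0}))

/-- Restriction of a word on a grid to the axis-`i` line through `y`. -/
def lineRestrict {F : Type*} {m : ℕ} {n : Fin m → ℕ}
    (x : (∀ j, Fin (n j)) → F) (i : Fin m) (y : ∀ j, Fin (n j)) : Fin (n i) → F :=
  fun s => x (Function.update y i s)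

/-- `‖x‖_i`: the fraction of axis-`i` parallel lines on which `x` is nonzero. -/
def lineWt {F : Type*} [Zero F] {m : ℕ} {n : Fin m → ℕ}
    (x : (∀ j, Fin (n j)) → F) (i : Fin m) : ℝ :=
  (Nat.card {y : ∀ j, Fin (n j) // lineRestrict x i y ≠ 0} : ℝ) /
    (Fintype.card (∀ j, Fin (n j)) : ℝ)

/-- `C^{(i)}`: words all of whose axis-`i` lines belong to `C i`. -/
def axisCode {F : Type*} {m : ℕ} {n : Fin m → ℕ}
    (C : ∀ i, Set (Fin (n i) → F)) (i : Fin m) : Set ((∀ j, Fin (n j)) → F) :=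
  {x | ∀ y, lineRestrict x i y ∈ C i}

/-- Tensor product code `C₁ ⊗ ⋯ ⊗ C_m`. -/
def prodCode {F : Type*} {m : ℕ} {n : Fin m → ℕ}
    (C : ∀ i, Set (Fin (n i) → F)) : Set ((∀ j, Fin (n j)) → F) :=
  ⋂ i, axisCode C i

/-- Dual code w.r.t. the standard bilinear form. -/
def dualCode {ι F : Type*} [Fintype ι] [CommRing F] (S : Set (ι → F)) : Set (ι → F) :=
  {x | ∀ c ∈ S, ∑ p, x p * c p = 0}

/-- `C₁ ⊞ ⋯ ⊞ C_m := (C₁^⊥ ⊗ ⋯ ⊗ C_m^⊥)^⊥`. -/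
def boxCode {F : Type*} [CommRing F] {m : ℕ} {n : Fin m → ℕ}
    (C : ∀ i, Set (Fin (n i) → F)) : Set ((∀ j, Fin (n j)) → F) :=
  dualCode (prodCode (fun i => dualCode (C i)))

/-- `ρ`-product-expansion of a collection of codes. -/
def productExpanding {F : Type*} [Field F] {m : ℕ} {n : Fin m → ℕ}
    (C : ∀ i, Set (Fin (n i) → F)) (ρ : ℝ) : Prop :=
  ∀ c ∈ boxCode C, ∃ a : Fin m → ((∀ j, Fin (n j)) → F),
    (∀ i, a i ∈ axisCode C i) ∧ c = ∑ i, a i ∧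
      ρ * ∑ i, lineWt (a i) i ≤ normWt c

/-- The product-expansion constant `ρ(𝒞)`. -/
def prodExpConst {F : Type*} [Field F] {m : ℕ} {n : Fin m → ℕ}
    (C : ∀ i, Set (Fin (n i) → F)) : ℝ :=
  sSup {ρ : ℝ | productExpanding C ρ}

/-- Expected distance under the axis-parallel line test `T_m^1`. -/
def lineTestE {F : Type*} [Field F] {m : ℕ} {n : Fin m → ℕ}
    (C : ∀ i, Set (Fin (n i) → F)) (x : (∀ j, Fin (n j)) → F) : ℝ :=
  (∑ i, (∑ y : ∀ j, Fin (n j), distTo (lineRestrict x i y) (C i)) /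
      (Fintype.card (∀ j, Fin (n j)) : ℝ)) / (m : ℝ)

/-- Robustness constant `ρ_r(T_m^1, ⊗𝒞)` of the axis-parallel line test. -/
def lineRobustConst {F : Type*} [Field F] {m : ℕ} {n : Fin m → ℕ}
    (C : ∀ i, Set (Fin (n i) → F)) : ℝ :=
  sSup {α : ℝ | ∀ x, α * distTo x (prodCode C) ≤ lineTestE C x}

/-- Agreement-testability constant `ρ_a(⊗𝒞)`. -/
def agreeConst {F : Type*} [Field F] {m : ℕ} {n : Fin m → ℕ}
    (C : ∀ i, Set (Fin (n i) → F)) : ℝ :=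
  sSup {α : ℝ | ∀ c : Fin m → ((∀ j, Fin (n j)) → F),
    (∀ i, c i ∈ axisCode C i) → ∃ z ∈ prodCode C,
      α * ((∑ i, lineWt (c i - z) i) / (m : ℝ)) ≤
        (∑ i, ∑ j, normWt (c i - c j)) / ((m : ℝ) ^ 2)}

/-- `C^{⊗k}` on the grid `[n]^k`. -/
def tensorPow {F : Type*} {n : ℕ} (C : Set (Fin n → F)) (k : ℕ) :
    Set ((Fin k → Fin n) → F) :=
  {x | ∀ (i : Fin k) (y : Fin k → Fin n), (fun s => x (Function.update y i s)) ∈ C}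

/-- Restriction of a word to the axis-parallel `k`-flat determined by the axes
`e : Fin k ↪ Fin m` and base point `y`. -/
def flatRestrict {F : Type*} {n m k : ℕ} (x : (Fin m → Fin n) → F)
    (e : Fin k ↪ Fin m) (y : Fin m → Fin n) : (Fin k → Fin n) → F :=
  fun z => x (fun j => if h : ∃ l, e l = j then z h.choose else y j)

/-- Expected distance under the axis-parallel `k`-flat test `T_m^k` for `C^{⊗m}`. -/
def flatTestE {F : Type*} [Field F] {n : ℕ} (C : Set (Fin n → F)) (m k : ℕ)
    (x : (Fin m → Fin n) → F) : ℝ :=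
  (∑ e : Fin k ↪ Fin m, ∑ y : Fin m → Fin n,
      distTo (flatRestrict x e y) (tensorPow C k)) /
    ((Fintype.card (Fin k ↪ Fin m) : ℝ) * (Fintype.card (Fin m → Fin n) : ℝ))

/-- Robustness constant `ρ_r(T_m^k, C^{⊗m})`. -/
def flatRobustConst {F : Type*} [Field F] {n : ℕ} (C : Set (Fin n → F)) (m k : ℕ) : ℝ :=
  sSup {α : ℝ | ∀ x : (Fin m → Fin n) → F,
    α * distTo x (tensorPow C m) ≤ flatTestE C m k x}

/-- The polynomial `Σ aᵢ xⁱ` of a word of length `n`. -/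
def wordPoly {F : Type*} [CommSemiring F] {n : ℕ} (a : Fin n → F) : Polynomial F :=
  ∑ i, Polynomial.C (a i) * Polynomial.X ^ (i : ℕ)

/-- The cyclic code of length `n` with check polynomial `p`. -/
def cyclicCode {F : Type*} [CommRing F] (n : ℕ) (p : Polynomial F) : Set (Fin n → F) :=
  {a | (Polynomial.X ^ n - 1) ∣ p * wordPoly a}

/-- Check polynomial `(x-1)(x-ω)⋯(x-ω^{k-1})` of the primitive Reed–Solomon code. -/
def rsCheck {F : Type*} [CommRing F] (k : ℕ) (ω : F) : Polynomial F :=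
  ∏ i ∈ Finset.range k, (Polynomial.X - Polynomial.C (ω ^ i))

/-- The primitive Reed–Solomon evaluation code of degree `< k` at the nonzero points. -/
def evalRS (F : Type*) [Field F] [Fintype F] (k : ℕ) : Set (Fˣ → F) :=
  {c | ∃ p : Polynomial F, p.degree < (k : ℕ) ∧ ∀ a : Fˣ, c a = p.eval (a : F)}

/-- Words on `ι₁ × ι₂` all of whose columns lie in `S`. -/
def colCode {ι₁ ι₂ F : Type*} (S : Set (ι₁ → F)) : Set (ι₁ × ι₂ → F) :=
  {x | ∀ j, (fun i => x (i, j)) ∈ S}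

/-- Words on `ι₁ × ι₂` all of whose rows lie in `S`. -/
def rowCode {ι₁ ι₂ F : Type*} (S : Set (ι₂ → F)) : Set (ι₁ × ι₂ → F) :=
  {x | ∀ i, (fun j => x (i, j)) ∈ S}

/-- The multivariate polynomial `Σ_y x_y ∏ᵢ Xᵢ^{yᵢ}` of a word on the grid `[n]^m`. -/
def wordPolyMv {F : Type*} [CommSemiring F] {m n : ℕ} (x : (Fin m → Fin n) → F) :
    MvPolynomial (Fin m) F :=
  ∑ y : Fin m → Fin n, MvPolynomial.C (x y) * ∏ i, MvPolynomial.X i ^ ((y i : ℕ))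

/-- robustness of test composition,
`ρ_r(T_m^{k₁}) ≥ ρ_r(T_m^{k₂}) · ρ_r(T_{k₂}^{k₁})`. -/
-- AUX LEMMAS



lemma emb_choose_eq {α β : Type*} (e : α ↪ β) {j : β} {l₀ : α} (hl₀ : e l₀ = j)
    (h : ∃ l, e l = j) : h.choose = l₀ :=
  e.injective (h.choose_spec.trans hl₀.symm)

lemma dindex_pos {α β γ : Type*} [Fintype β] [DecidableEq γ] (e : β ↪ γ) {j : γ} {l₀ : β} (hl : e l₀ = j)
    (z : β → α) (y : γ → α) {_ : Decidable (∃ l, e l = j)} :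
    (if h : ∃ l, e l = j then z h.choose else y j) = z l₀ := by
  rw [dif_pos ⟨l₀, hl⟩, emb_choose_eq e hl]

def combBase {n m k₂ : ℕ} (e₂ : Fin k₂ ↪ Fin m) (y₂ : Fin m → Fin n)
    (y₁ : Fin k₂ → Fin n) : Fin m → Fin n :=
  fun j => if h : ∃ l, e₂ l = j then y₁ h.choose else y₂ j

lemma combBase_apply_emb {n m k₂ : ℕ} (e₂ : Fin k₂ ↪ Fin m) (y₂ : Fin m → Fin n)
    (y₁ : Fin k₂ → Fin n) (l : Fin k₂) : combBase e₂ y₂ y₁ (e₂ l) = y₁ l :=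
  dindex_pos e₂ rfl y₁ y₂

lemma flatRestrict_flatRestrict {F : Type*} {n m k₂ k₁ : ℕ} (x : (Fin m → Fin n) → F)
    (e₂ : Fin k₂ ↪ Fin m) (e₁ : Fin k₁ ↪ Fin k₂) (y₂ : Fin m → Fin n) (y₁ : Fin k₂ → Fin n) :
    flatRestrict (flatRestrict x e₂ y₂) e₁ y₁
      = flatRestrict x (e₁.trans e₂) (combBase e₂ y₂ y₁) := by
  funext z
  show x _ = x _
  congr 1
  funext j
  by_cases h2 : ∃ l, e₂ l = j
  · obtain ⟨l₀, hl₀⟩ := h2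
    refine (dindex_pos e₂ hl₀ (fun l => if h : ∃ t, e₁ t = l then z h.choose else y₁ l) y₂).trans ?_
    by_cases h1 : ∃ t, e₁ t = l₀
    · obtain ⟨t₀, ht₀⟩ := h1
      have htr : (e₁.trans e₂) t₀ = j := by
        simp only [Function.Embedding.trans_apply, ht₀, hl₀]
      exact (dindex_pos e₁ ht₀ z y₁).trans (dindex_pos (e₁.trans e₂) htr z _).symm
    · have htr : ¬ ∃ t, (e₁.trans e₂) t = j := by
        rintro ⟨t, ht⟩
        exact h1 ⟨t, e₂.injective (ht.trans hl₀.symm)⟩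
      refine (dif_neg h1).trans ?_
      rw [dif_neg htr, ← hl₀, combBase_apply_emb]
  · have htr : ¬ ∃ t, (e₁.trans e₂) t = j := by
      rintro ⟨t, ht⟩
      exact h2 ⟨e₁ t, ht⟩
    rw [dif_neg h2, dif_neg htr]
    show y₂ j = if h : ∃ l, e₂ l = j then y₁ h.choose else y₂ j
    rw [dif_neg h2]

lemma combBase_invol {n m k₂ : ℕ} (e₂ : Fin k₂ ↪ Fin m) (y₂ : Fin m → Fin n)
    (y₁ : Fin k₂ → Fin n) :
    combBase e₂ (combBase e₂ y₂ y₁) (fun l => y₂ (e₂ l)) = y₂ := by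
  funext j
  by_cases h : ∃ l, e₂ l = j
  · obtain ⟨l₀, hl₀⟩ := h
    show (if h : ∃ l, e₂ l = j then (fun l => y₂ (e₂ l)) h.choose else combBase e₂ y₂ y₁ j) = y₂ j
    refine (dindex_pos e₂ hl₀ (fun l => y₂ (e₂ l)) (combBase e₂ y₂ y₁)).trans ?_
    rw [hl₀]
  · show (if h : ∃ l, e₂ l = j then (fun l => y₂ (e₂ l)) h.choose else combBase e₂ y₂ y₁ j) = y₂ j
    rw [dif_neg h]
    show combBase e₂ y₂ y₁ j = y₂ j
    rw [combBase, dif_neg h]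

def combEquiv {n m k₂ : ℕ} (e₂ : Fin k₂ ↪ Fin m) :
    ((Fin m → Fin n) × (Fin k₂ → Fin n)) ≃ ((Fin m → Fin n) × (Fin k₂ → Fin n)) where
  toFun p := (combBase e₂ p.1 p.2, fun l => p.1 (e₂ l))
  invFun p := (combBase e₂ p.1 p.2, fun l => p.1 (e₂ l))
  left_inv p := Prod.ext (combBase_invol e₂ p.1 p.2)
    (funext fun l => combBase_apply_emb e₂ p.1 p.2 l)
  right_inv p := Prod.ext (combBase_invol e₂ p.1 p.2)
    (funext fun l => combBase_apply_emb e₂ p.1 p.2 l)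

lemma sum_comb {n m k₂ : ℕ} (e₂ : Fin k₂ ↪ Fin m) (G : (Fin m → Fin n) → ℝ) :
    ∑ y₂ : Fin m → Fin n, ∑ y₁ : Fin k₂ → Fin n, G (combBase e₂ y₂ y₁)
      = (Fintype.card (Fin k₂ → Fin n) : ℝ) * ∑ y : Fin m → Fin n, G y := by
  have h1 : ∑ p : (Fin m → Fin n) × (Fin k₂ → Fin n), G ((combEquiv e₂ p).1)
      = ∑ p : (Fin m → Fin n) × (Fin k₂ → Fin n), G p.1 :=
    Equiv.sum_comp (combEquiv e₂) (fun p => G p.1)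
  rw [Fintype.sum_prod_type] at h1
  simp only [combEquiv, Equiv.coe_fn_mk] at h1
  rw [h1, Fintype.sum_prod_type]
  simp only [Finset.sum_const, Finset.card_univ, nsmul_eq_mul]
  rw [← Finset.mul_sum]



lemma exists_perm_comp {k m : ℕ} (e e' : Fin k ↪ Fin m) :
    ∃ σ : Equiv.Perm (Fin m), ∀ l, σ (e l) = e' l := by
  classical
  let eqv : {x // x ∈ Set.range e} ≃ {x // x ∈ Set.range e'} :=
    (Equiv.ofInjective e e.injective).symm.trans (Equiv.ofInjective e' e'.injective)
  refine ⟨eqv.extendSubtype, fun l => ?_⟩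
  rw [Equiv.extendSubtype_apply_of_mem eqv (e l) ⟨l, rfl⟩]
  have h1 : (⟨e l, ⟨l, rfl⟩⟩ : {x // x ∈ Set.range e}) = Equiv.ofInjective e e.injective l :=
    Subtype.ext rfl
  show ((eqv ⟨e l, ⟨l, rfl⟩⟩ : {x // x ∈ Set.range e'}) : Fin m) = e' l
  rw [h1]
  show ((Equiv.ofInjective e' e'.injective)
      ((Equiv.ofInjective e e.injective).symm (Equiv.ofInjective e e.injective l)) : Fin m) = e' l
  rw [Equiv.symm_apply_apply]
  rfl

open Finset

lemma sum_trans_pairs {k₁ k₂ m : ℕ} (hk1 : k₁ ≤ k₂) (hk2 : k₂ ≤ m) :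
    ∃ B : ℕ, 0 < B ∧
      Fintype.card ((Fin k₂ ↪ Fin m) × (Fin k₁ ↪ Fin k₂))
        = Fintype.card (Fin k₁ ↪ Fin m) * B ∧
      ∀ f : (Fin k₁ ↪ Fin m) → ℝ,
        (∑ p : (Fin k₂ ↪ Fin m) × (Fin k₁ ↪ Fin k₂), f (p.2.trans p.1))
          = B • ∑ e : Fin k₁ ↪ Fin m, f e := by
  classical
  set cmp : (Fin k₂ ↪ Fin m) × (Fin k₁ ↪ Fin k₂) → (Fin k₁ ↪ Fin m) :=
    fun p => p.2.trans p.1 with hcmp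
  set e₀ : Fin k₁ ↪ Fin m := (Fin.castLEEmb hk1).trans (Fin.castLEEmb hk2) with he₀
  set B := (Finset.univ.filter fun p => cmp p = e₀).card with hB
  have hconst : ∀ e : Fin k₁ ↪ Fin m, (univ.filter fun p => cmp p = e).card = B := by
    intro e
    obtain ⟨σ, hσ⟩ := exists_perm_comp e₀ e
    have hσ' : ∀ l, σ.symm (e l) = e₀ l := fun l => by
      rw [← hσ l, Equiv.symm_apply_apply]
    apply Finset.card_bij
      (fun p _ => ((p.1.trans σ.symm.toEmbedding, p.2) :
        (Fin k₂ ↪ Fin m) × (Fin k₁ ↪ Fin k₂)))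
    · rintro ⟨a, b⟩ hp
      simp only [mem_filter, mem_univ, true_and] at hp ⊢
      have hp' : ∀ l, a (b l) = e l := fun l => DFunLike.congr_fun hp l
      refine DFunLike.ext _ _ fun l => ?_
      show σ.symm (a (b l)) = e₀ l
      exact (congrArg σ.symm (hp' l)).trans (hσ' l)
    · rintro ⟨a, b⟩ ha ⟨c, d⟩ hc h
      obtain ⟨h1, h2⟩ := Prod.mk.injEq _ _ _ _ ▸ h
      have : a = c := by
        refine DFunLike.ext _ _ fun t => ?_
        have h3 := DFunLike.congr_fun h1 t
        exact σ.symm.injective h3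
      exact Prod.ext this h2
    · rintro ⟨a, b⟩ hq
      simp only [mem_filter, mem_univ, true_and] at hq
      refine ⟨(a.trans σ.toEmbedding, b), ?_, ?_⟩
      · simp only [mem_filter, mem_univ, true_and]
        have hq' : ∀ l, a (b l) = e₀ l := fun l => DFunLike.congr_fun hq l
        refine DFunLike.ext _ _ fun l => ?_
        show σ (a (b l)) = e l
        exact (congrArg σ (hq' l)).trans (hσ l)
      · refine Prod.ext ?_ rfl
        refine DFunLike.ext _ _ fun t => ?_
        show σ.symm (σ (a t)) = a t
        simp
  have hBpos : 0 < B := by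
    rw [hB]
    apply Finset.card_pos.mpr
    exact ⟨(Fin.castLEEmb hk2, Fin.castLEEmb hk1), by simp [mem_filter, cmp, he₀]⟩
  refine ⟨B, hBpos, ?_, ?_⟩
  · have := Finset.card_eq_sum_card_fiberwise
      (f := cmp) (s := univ) (t := univ) (fun x _ => mem_univ _)
    rw [← Finset.card_univ, this]
    rw [Finset.sum_congr rfl (fun e _ => hconst e), Finset.sum_const, Finset.card_univ,
      smul_eq_mul]
  · intro f
    have := Finset.sum_fiberwise' (univ : Finset ((Fin k₂ ↪ Fin m) × (Fin k₁ ↪ Fin k₂)))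
      cmp f
    rw [← this]
    rw [Finset.sum_congr rfl (fun e _ => by rw [Finset.sum_const, hconst e])]
    rw [← Finset.smul_sum]


lemma normWt_nonneg {ι F : Type*} [Fintype ι] [Zero F] (x : ι → F) : 0 ≤ normWt x :=
  div_nonneg (Nat.cast_nonneg _) (Nat.cast_nonneg _)

lemma distTo_nonneg {ι F : Type*} [Fintype ι] [AddGroup F] (x : ι → F) (S : Set (ι → F)) :
    0 ≤ distTo x S := by
  apply Real.sInf_nonneg
  rintro _ ⟨c, -, rfl⟩
  exact normWt_nonneg _

lemma distTo_le' {ι F : Type*} [Fintype ι] [AddGroup F] (x : ι → F) (S : Set (ι → F))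
    {c : ι → F} (hc : c ∈ S) : distTo x S ≤ normWt (x - c) :=
  csInf_le ⟨0, by rintro _ ⟨d, -, rfl⟩; exact normWt_nonneg _⟩ ⟨c, hc, rfl⟩

lemma flatTestE_nonneg {F : Type*} [Field F] {n : ℕ} (C : Set (Fin n → F)) (m k : ℕ)
    (x : (Fin m → Fin n) → F) : 0 ≤ flatTestE C m k x :=
  div_nonneg (Finset.sum_nonneg fun _ _ => Finset.sum_nonneg fun _ _ => distTo_nonneg _ _)
    (mul_nonneg (Nat.cast_nonneg _) (Nat.cast_nonneg _))

lemma zero_mem_tensorPow {F : Type*} [Field F] {n : ℕ} (C : Submodule F (Fin n → F)) (k : ℕ) :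
    (0 : (Fin k → Fin n) → F) ∈ tensorPow (C : Set (Fin n → F)) k :=
  fun _ _ => C.zero_mem

lemma zero_mem_robustSet {F : Type*} [Field F] {n : ℕ} (C : Set (Fin n → F)) (m k : ℕ) :
    (0 : ℝ) ∈ {α : ℝ | ∀ x : (Fin m → Fin n) → F,
      α * distTo x (tensorPow C m) ≤ flatTestE C m k x} :=
  fun x => by rw [zero_mul]; exact flatTestE_nonneg C m k x

lemma sSup_mem_robustSet {F : Type*} [Field F] {n : ℕ} (C : Set (Fin n → F)) (m k : ℕ) :
    sSup {α : ℝ | ∀ x : (Fin m → Fin n) → F,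
        α * distTo x (tensorPow C m) ≤ flatTestE C m k x}
      ∈ {α : ℝ | ∀ x : (Fin m → Fin n) → F,
        α * distTo x (tensorPow C m) ≤ flatTestE C m k x} := by
  intro x
  rcases (distTo_nonneg x (tensorPow C m)).eq_or_lt with h | h
  · rw [← h, mul_zero]; exact flatTestE_nonneg C m k x
  · have hub : sSup _ ≤ flatTestE C m k x / distTo x (tensorPow C m) :=
      csSup_le ⟨0, zero_mem_robustSet C m k⟩ (fun α hα => (le_div_iff₀ h).2 (hα x))
    exact (le_div_iff₀ h).1 hub

set_option maxHeartbeats 1000000 in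
lemma avg_flatTestE {F : Type*} [Field F] {n : ℕ} (C : Set (Fin n → F)) {k₁ k₂ m : ℕ}
    (hk1 : k₁ ≤ k₂) (hk2 : k₂ ≤ m) (hn : 0 < n) (x : (Fin m → Fin n) → F) :
    (∑ e₂ : Fin k₂ ↪ Fin m, ∑ y₂ : Fin m → Fin n,
        flatTestE C k₂ k₁ (flatRestrict x e₂ y₂)) /
      ((Fintype.card (Fin k₂ ↪ Fin m) : ℝ) * (Fintype.card (Fin m → Fin n) : ℝ))
      = flatTestE C m k₁ x := by
  classical
  obtain ⟨B, hBpos, hcard, hsum⟩ := sum_trans_pairs hk1 hk2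
  set f : (Fin k₁ ↪ Fin m) → (Fin m → Fin n) → ℝ :=
    fun e y => distTo (flatRestrict x e y) (tensorPow C k₁) with hf
  set N : ℕ := Fintype.card (Fin k₁ ↪ Fin m) with hN
  set N₂ : ℕ := Fintype.card (Fin k₂ ↪ Fin m) with hN₂
  set N₁ : ℕ := Fintype.card (Fin k₁ ↪ Fin k₂) with hN₁
  set Km : ℕ := Fintype.card (Fin m → Fin n) with hKm
  set Kk : ℕ := Fintype.card (Fin k₂ → Fin n) with hKk
  set S : ℝ := ∑ e : Fin k₁ ↪ Fin m, ∑ y : Fin m → Fin n, f e y with hS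
  have hstep : ∀ (e₂ : Fin k₂ ↪ Fin m) (y₂ : Fin m → Fin n),
      flatTestE C k₂ k₁ (flatRestrict x e₂ y₂)
        = (∑ e₁ : Fin k₁ ↪ Fin k₂, ∑ y₁ : Fin k₂ → Fin n,
            f (e₁.trans e₂) (combBase e₂ y₂ y₁)) / ((N₁ : ℝ) * (Kk : ℝ)) := by
    intro e₂ y₂
    have hEdef : flatTestE C k₂ k₁ (flatRestrict x e₂ y₂)
        = (∑ e₁ : Fin k₁ ↪ Fin k₂, ∑ y₁ : Fin k₂ → Fin n,
            distTo (flatRestrict (flatRestrict x e₂ y₂) e₁ y₁) (tensorPow C k₁)) /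
          ((N₁ : ℝ) * (Kk : ℝ)) := rfl
    rw [hEdef]
    congr 1
    refine Finset.sum_congr rfl fun e₁ _ => Finset.sum_congr rfl fun y₁ _ => ?_
    show distTo (flatRestrict (flatRestrict x e₂ y₂) e₁ y₁) (tensorPow C k₁)
      = f (e₁.trans e₂) (combBase e₂ y₂ y₁)
    rw [hf]
    rw [flatRestrict_flatRestrict x e₂ e₁ y₂ y₁]
  have hT : ∑ e₂ : Fin k₂ ↪ Fin m, ∑ y₂ : Fin m → Fin n,
      flatTestE C k₂ k₁ (flatRestrict x e₂ y₂)
        = ((Kk : ℝ) * ((B : ℝ) * S)) / ((N₁ : ℝ) * (Kk : ℝ)) := by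
    rw [Finset.sum_congr rfl fun e₂ _ => Finset.sum_congr rfl fun y₂ _ => hstep e₂ y₂]
    simp only [← Finset.sum_div]
    congr 1
    have h1 : ∀ e₂ : Fin k₂ ↪ Fin m,
        ∑ y₂ : Fin m → Fin n, ∑ e₁ : Fin k₁ ↪ Fin k₂, ∑ y₁ : Fin k₂ → Fin n,
            f (e₁.trans e₂) (combBase e₂ y₂ y₁)
          = ∑ e₁ : Fin k₁ ↪ Fin k₂, (Kk : ℝ) * ∑ y : Fin m → Fin n, f (e₁.trans e₂) y := by
      intro e₂
      rw [Finset.sum_comm]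
      exact Finset.sum_congr rfl fun e₁ _ => sum_comb e₂ (f (e₁.trans e₂))
    rw [Finset.sum_congr rfl fun e₂ _ => h1 e₂]
    have h2 : ∑ e₂ : Fin k₂ ↪ Fin m, ∑ e₁ : Fin k₁ ↪ Fin k₂,
        (Kk : ℝ) * ∑ y : Fin m → Fin n, f (e₁.trans e₂) y
          = (Kk : ℝ) * ∑ p : (Fin k₂ ↪ Fin m) × (Fin k₁ ↪ Fin k₂),
              ∑ y : Fin m → Fin n, f (p.2.trans p.1) y := by
      rw [Finset.mul_sum, Fintype.sum_prod_type]
    rw [h2]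
    congr 1
    have h3 : ∑ p : (Fin k₂ ↪ Fin m) × (Fin k₁ ↪ Fin k₂), ∑ y : Fin m → Fin n,
        f (p.2.trans p.1) y = ∑ y : Fin m → Fin n,
          ∑ p : (Fin k₂ ↪ Fin m) × (Fin k₁ ↪ Fin k₂), f (p.2.trans p.1) y :=
      Finset.sum_comm
    rw [h3, Finset.sum_congr rfl fun y _ => hsum (fun e => f e y)]
    rw [hS, Finset.sum_comm]
    rw [← Finset.smul_sum, nsmul_eq_mul]
  rw [hT]
  have hflat : flatTestE C m k₁ x = S / ((N : ℝ) * (Km : ℝ)) := rfl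
  rw [hflat]
  have hNpos : 0 < N := Fintype.card_pos (α := Fin k₁ ↪ Fin m)
    (h := ⟨Fin.castLEEmb (hk1.trans hk2)⟩)
  have hN₂pos : 0 < N₂ := Fintype.card_pos (α := Fin k₂ ↪ Fin m)
    (h := ⟨Fin.castLEEmb hk2⟩)
  have hN₁pos : 0 < N₁ := Fintype.card_pos (α := Fin k₁ ↪ Fin k₂)
    (h := ⟨Fin.castLEEmb hk1⟩)
  have hKmpos : 0 < Km := Fintype.card_pos (α := Fin m → Fin n)
    (h := ⟨fun _ => ⟨0, hn⟩⟩)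
  have hKkpos : 0 < Kk := Fintype.card_pos (α := Fin k₂ → Fin n)
    (h := ⟨fun _ => ⟨0, hn⟩⟩)
  have hkey : (N₂ : ℝ) * (N₁ : ℝ) = (N : ℝ) * (B : ℝ) := by
    have := hcard
    rw [Fintype.card_prod] at this
    rw [← hN₂, ← hN₁] at this
    exact_mod_cast congrArg (Nat.cast : ℕ → ℝ) this
  have h0 : (N : ℝ) ≠ 0 := Nat.cast_ne_zero.2 hNpos.ne'
  have h1 : (N₁ : ℝ) ≠ 0 := Nat.cast_ne_zero.2 hN₁pos.ne'
  have h2 : (N₂ : ℝ) ≠ 0 := Nat.cast_ne_zero.2 hN₂pos.ne'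
  have h3 : (Km : ℝ) ≠ 0 := Nat.cast_ne_zero.2 hKmpos.ne'
  have h4 : (Kk : ℝ) ≠ 0 := Nat.cast_ne_zero.2 hKkpos.ne'
  have h5 : (B : ℝ) ≠ 0 := Nat.cast_ne_zero.2 hBpos.ne'
  field_simp
  linear_combination (-S) * hkey

set_option maxHeartbeats 1000000 in
theorem stmt_6 {F : Type*} [Field F] [Fintype F] {n : ℕ} (C : Submodule F (Fin n → F))
    (k₁ k₂ m : ℕ) (h1 : 1 ≤ k₁) (h2 : k₁ < k₂) (h3 : k₂ < m) :
    flatRobustConst (C : Set (Fin n → F)) m k₂ * flatRobustConst (C : Set (Fin n → F)) k₂ k₁ ≤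
      flatRobustConst (C : Set (Fin n → F)) m k₁ := by
  classical
  set CS : Set (Fin n → F) := (C : Set (Fin n → F)) with hCS
  set A := {α : ℝ | ∀ x : (Fin m → Fin n) → F,
    α * distTo x (tensorPow CS m) ≤ flatTestE CS m k₂ x} with hA
  set Bs := {α : ℝ | ∀ x : (Fin k₂ → Fin n) → F,
    α * distTo x (tensorPow CS k₂) ≤ flatTestE CS k₂ k₁ x} with hBs
  set Cs := {α : ℝ | ∀ x : (Fin m → Fin n) → F,
    α * distTo x (tensorPow CS m) ≤ flatTestE CS m k₁ x} with hCs
  show sSup A * sSup Bs ≤ sSup Cs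
  by_cases H0 : ∀ x : (Fin m → Fin n) → F, distTo x (tensorPow CS m) = 0
  · have hAu : A = Set.univ := Set.eq_univ_of_forall fun α x => by
      rw [H0 x, mul_zero]; exact flatTestE_nonneg CS m k₂ x
    have hCu : Cs = Set.univ := Set.eq_univ_of_forall fun α x => by
      rw [H0 x, mul_zero]; exact flatTestE_nonneg CS m k₁ x
    rw [hAu, hCu, Real.sSup_univ, zero_mul]
  · push_neg at H0
    obtain ⟨x₀, hx₀⟩ := H0
    have hd₀ : 0 < distTo x₀ (tensorPow CS m) :=
      (distTo_nonneg x₀ (tensorPow CS m)).lt_of_ne (Ne.symm hx₀)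
    have hn : 0 < n := by
      by_contra hncon
      push_neg at hncon
      have hn0 : n = 0 := by omega
      subst hn0
      apply hx₀
      have hm : 0 < m := by omega
      have hempty : IsEmpty (Fin m → Fin 0) := ⟨fun g => (g ⟨0, hm⟩).elim0⟩
      have h0mem : (0 : (Fin m → Fin 0) → F) ∈ tensorPow CS m := zero_mem_tensorPow C m
      have hle : distTo x₀ (tensorPow CS m) ≤ normWt (x₀ - 0) := distTo_le' x₀ _ h0mem
      have hw : normWt (x₀ - 0) = 0 := by
        rw [normWt]
        have : Nat.card {p : Fin m → Fin 0 // (x₀ - 0) p ≠ 0} = 0 := by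
          simp [Nat.card_eq_zero]
        rw [this]
        simp
      exact le_antisymm (hw ▸ hle) (distTo_nonneg _ _)
    have hCsBdd : BddAbove Cs :=
      ⟨flatTestE CS m k₁ x₀ / distTo x₀ (tensorPow CS m),
        fun α hα => (le_div_iff₀ hd₀).2 (hα x₀)⟩
    by_cases hBb : BddAbove Bs
    · have haA : sSup A ∈ A := sSup_mem_robustSet CS m k₂
      have hbB : sSup Bs ∈ Bs := sSup_mem_robustSet CS k₂ k₁
      have hb0 : (0 : ℝ) ≤ sSup Bs := le_csSup hBb (zero_mem_robustSet CS k₂ k₁)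
      have hab : sSup A * sSup Bs ∈ Cs := by
        intro x
        have step1 : sSup A * sSup Bs * distTo x (tensorPow CS m)
            ≤ sSup Bs * flatTestE CS m k₂ x := by
          have := mul_le_mul_of_nonneg_left (haA x) hb0
          calc sSup A * sSup Bs * distTo x (tensorPow CS m)
              = sSup Bs * (sSup A * distTo x (tensorPow CS m)) := by ring
            _ ≤ sSup Bs * flatTestE CS m k₂ x := this
        refine step1.trans ?_
        -- key: sSup Bs * flatTestE CS m k₂ x ≤ flatTestE CS m k₁ x
        rw [← avg_flatTestE CS h2.le h3.le hn x]
        have hEexp : flatTestE CS m k₂ x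
            = (∑ e₂ : Fin k₂ ↪ Fin m, ∑ y₂ : Fin m → Fin n,
                distTo (flatRestrict x e₂ y₂) (tensorPow CS k₂)) /
              ((Fintype.card (Fin k₂ ↪ Fin m) : ℝ) *
                (Fintype.card (Fin m → Fin n) : ℝ)) := rfl
        rw [hEexp, mul_div_assoc']
        have hDpos : (0 : ℝ) < (Fintype.card (Fin k₂ ↪ Fin m) : ℝ) *
            (Fintype.card (Fin m → Fin n) : ℝ) := by
          have hp1 : 0 < Fintype.card (Fin k₂ ↪ Fin m) :=
            Fintype.card_pos (h := ⟨Fin.castLEEmb h3.le⟩)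
          have hp2 : 0 < Fintype.card (Fin m → Fin n) :=
            Fintype.card_pos (h := ⟨fun _ => ⟨0, hn⟩⟩)
          positivity
        rw [div_le_div_iff_of_pos_right hDpos]
        rw [Finset.mul_sum]
        refine Finset.sum_le_sum fun e₂ _ => ?_
        rw [Finset.mul_sum]
        refine Finset.sum_le_sum fun y₂ _ => ?_
        exact hbB (flatRestrict x e₂ y₂)
      exact le_csSup hCsBdd hab
    · rw [Real.sSup_of_not_bddAbove hBb, mul_zero]
      exact le_csSup hCsBdd (zero_mem_robustSet CS m k₁)

end
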